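/- For all complex numbers s_1, s_2, s_3, the 4×4 code matrix X = (1/√3)·[[s_1, 0, s_2, −s_3],[0, s_1, conj(s_3), conj(s_2)],[−conj(s_2), −s_3, conj(s_1), 0],[conj(s_3), −s_2, 0, conj(s_1)]] satisfies X X^H = ((|s_1|² + |s_2|² + |s_3|²)/3) · I_4. In particular, if |s_1| = |s_2| = |s_3| = 1 then X is unitary. -/

import Mathlib

open Matrix Complex

/-- The rate-3/4 orthogonal space-time code matrix of Eq. (25). -/
noncomputable def rate34Code (s1 s2 s3 : ℂ) : Matrix (Fin 4) (Fin 4) ℂ :=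
  ((Real.sqrt 3 : ℂ))⁻¹ •
    !![s1, 0, s2, -s3;
       0, s1, (starRingEnd ℂ) s3, (starRingEnd ℂ) s2;
       -((starRingEnd ℂ) s2), -s3, (starRingEnd ℂ) s1, 0;
       (starRingEnd ℂ) s3, -s2, 0, (starRingEnd ℂ) s1]

lemma rate34_base (s1 s2 s3 : ℂ) :
    (!![s1, 0, s2, -s3;
       0, s1, (starRingEnd ℂ) s3, (starRingEnd ℂ) s2;
       -((starRingEnd ℂ) s2), -s3, (starRingEnd ℂ) s1, 0;
       (starRingEnd ℂ) s3, -s2, 0, (starRingEnd ℂ) s1] *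
     !![s1, 0, s2, -s3;
       0, s1, (starRingEnd ℂ) s3, (starRingEnd ℂ) s2;
       -((starRingEnd ℂ) s2), -s3, (starRingEnd ℂ) s1, 0;
       (starRingEnd ℂ) s3, -s2, 0, (starRingEnd ℂ) s1]ᴴ)
    = (s1 * (starRingEnd ℂ) s1 + s2 * (starRingEnd ℂ) s2 + s3 * (starRingEnd ℂ) s3) • 1 := by
  ext i j
  fin_cases i <;> fin_cases j <;>
    simp [Matrix.mul_apply, Fin.sum_univ_four, Matrix.one_apply] <;> ring

/-- The rate-3/4 code matrix satisfies `X Xᴴ = ((|s_1|² + |s_2|² + |s_3|²)/3) I₄`; in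
particular, if `|s_1| = |s_2| = |s_3| = 1` then `X` is unitary. -/
theorem rate34Code_mul_conjTranspose (s1 s2 s3 : ℂ) :
    rate34Code s1 s2 s3 * (rate34Code s1 s2 s3)ᴴ
        = ((((‖s1‖ ^ 2 + ‖s2‖ ^ 2 + ‖s3‖ ^ 2) / 3 : ℝ)) : ℂ) • 1
      ∧ (‖s1‖ = 1 → ‖s2‖ = 1 → ‖s3‖ = 1 →
          rate34Code s1 s2 s3 ∈ Matrix.unitaryGroup (Fin 4) ℂ) := by
  set c : ℂ := ((Real.sqrt 3 : ℂ))⁻¹ with hc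
  have hcc : star c = c := by
    simp [hc, Complex.star_def, ← Complex.ofReal_inv]
  have hc2 : c * c = (3 : ℂ)⁻¹ := by
    rw [hc, ← mul_inv]
    norm_cast
    rw [Real.mul_self_sqrt (by norm_num)]
    norm_num
  have key : rate34Code s1 s2 s3 * (rate34Code s1 s2 s3)ᴴ
      = ((((‖s1‖ ^ 2 + ‖s2‖ ^ 2 + ‖s3‖ ^ 2) / 3 : ℝ)) : ℂ) • 1 := by
    rw [rate34Code, Matrix.conjTranspose_smul, Matrix.smul_mul, Matrix.mul_smul,
      smul_smul]
    rw [rate34_base, Complex.mul_conj, Complex.mul_conj, Complex.mul_conj, smul_smul]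
    congr 1
    rw [hcc, hc2, ← Complex.sq_norm, ← Complex.sq_norm, ← Complex.sq_norm]
    push_cast
    ring
  refine ⟨key, fun h1 h2 h3 => ?_⟩
  rw [Matrix.mem_unitaryGroup_iff]
  show rate34Code s1 s2 s3 * (rate34Code s1 s2 s3)ᴴ = 1
  rw [key, h1, h2, h3]
  norm_num
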